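/- For every natural number q and every divisor d of q, one has κ(d)·κ(q/d) ≤ k^{2ω(q)}·κ(q). -/

import Mathlib

/-- Auxiliary exponent: for `n ≥ 1`, `κ(p^n) = k^(kEps k n) * p^(-(kEm k n)/2)`. -/
def kEm (k n : ℕ) : ℕ := if (n-1) % k = 0 then 2*((n-1)/k) + 1 else 2*((n-1)/k) + 2

def kEps (k n : ℕ) : ℕ := if (n-1) % k = 0 then 1 else 0

lemma kEm_superadd (k : ℕ) (hk : 2 ≤ k) (a b : ℕ) (ha : 1 ≤ a) (hb : 1 ≤ b) :
    kEm k (a + b) ≤ kEm k a + kEm k b := by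
  have hk0 : 0 < k := by omega
  set u₁ := (a-1)/k with hu₁
  set r₁ := (a-1)%k with hr₁
  set u₂ := (b-1)/k with hu₂
  set r₂ := (b-1)%k with hr₂
  have ha' : a - 1 = k * u₁ + r₁ := (Nat.div_add_mod (a-1) k).symm
  have hb' : b - 1 = k * u₂ + r₂ := (Nat.div_add_mod (b-1) k).symm
  have hr₁k : r₁ < k := Nat.mod_lt _ hk0
  have hr₂k : r₂ < k := Nat.mod_lt _ hk0
  have hmul : k * (u₁ + u₂) = k * u₁ + k * u₂ := Nat.mul_add k u₁ u₂
  have hmul2 : k * (u₁ + u₂ + 1) = k * u₁ + k * u₂ + k := by ring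
  have hab : a + b - 1 = r₁ + r₂ + 1 + k * (u₁ + u₂) := by omega
  by_cases hs : r₁ + r₂ + 1 < k
  · have hdiv : (a + b - 1) / k = u₁ + u₂ := by
      rw [hab, Nat.add_mul_div_left _ _ hk0, Nat.div_eq_of_lt hs, Nat.zero_add]
    have hmod : (a + b - 1) % k = r₁ + r₂ + 1 := by
      rw [hab, Nat.add_mul_mod_self_left, Nat.mod_eq_of_lt hs]
    simp only [kEm, hdiv, hmod]
    split_ifs <;> omega
  · have hab2 : a + b - 1 = (r₁ + r₂ + 1 - k) + k * (u₁ + u₂ + 1) := by omega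
    have hs' : r₁ + r₂ + 1 - k < k := by omega
    have hdiv : (a + b - 1) / k = u₁ + u₂ + 1 := by
      rw [hab2, Nat.add_mul_div_left _ _ hk0, Nat.div_eq_of_lt hs', Nat.zero_add]
    have hmod : (a + b - 1) % k = r₁ + r₂ + 1 - k := by
      rw [hab2, Nat.add_mul_mod_self_left, Nat.mod_eq_of_lt hs']
    simp only [kEm, hdiv, hmod]
    split_ifs <;> omega

/-- For every natural number `q` and every divisor `d` of `q`, one has
`κ(d)·κ(q/d) ≤ k^{2ω(q)}·κ(q)`, where `ω(q)` is the number of distinct prime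
divisors of `q`. -/
theorem stmt3 (k : ℕ) (hk : 2 ≤ k) (κ : ℕ → ℝ)
    (hκ1 : κ 1 = 1)
    (hκmul : ∀ m n : ℕ, Nat.Coprime m n → κ (m * n) = κ m * κ n)
    (hκA : ∀ p : ℕ, p.Prime → ∀ u : ℕ,
      κ (p ^ (u * k + 1)) = (k : ℝ) * (p : ℝ) ^ (-(u : ℝ) - 1/2))
    (hκB : ∀ p : ℕ, p.Prime → ∀ u v : ℕ, 2 ≤ v → v ≤ k →
      κ (p ^ (u * k + v)) = (p : ℝ) ^ (-(u : ℝ) - 1))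
    (q d : ℕ) (hq : 0 < q) (hd : d ∣ q) :
    κ d * κ (q / d) ≤ (k : ℝ) ^ (2 * q.primeFactors.card) * κ q := by
  have hk0 : 0 < k := by omega
  have hk1 : (1:ℝ) ≤ (k:ℝ) := by exact_mod_cast Nat.one_le_of_lt hk
  -- formula for κ on prime powers
  have hform : ∀ p : ℕ, p.Prime → ∀ n : ℕ, 1 ≤ n →
      κ (p ^ n) = (k:ℝ) ^ (kEps k n) * (p:ℝ) ^ (-(kEm k n : ℝ)/2) := by
    intro p hp n hn
    set u := (n-1)/k with hu
    set r := (n-1)%k with hr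
    have hcomm : u * k = k * u := Nat.mul_comm u k
    have hn' : n = u * k + (r + 1) := by
      have h := Nat.div_add_mod (n-1) k
      have hku : k * ((n-1)/k) = k * u := by rw [hu]
      omega
    have hrk : r < k := Nat.mod_lt _ hk0
    by_cases h0 : r = 0
    · have hmod0 : (n-1) % k = 0 := by rw [← hr]; exact h0
      have hEps : kEps k n = 1 := by rw [kEps, if_pos hmod0]
      have hEm : kEm k n = 2 * u + 1 := by rw [kEm, if_pos hmod0, ← hu]
      have hne : n = u * k + 1 := by omega
      rw [hEps, hEm, pow_one, hne, hκA p hp u]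
      congr 1
      push_cast
      ring
    · have hmodne : (n-1) % k ≠ 0 := by rw [← hr]; exact h0
      have hEps : kEps k n = 0 := by rw [kEps, if_neg hmodne]
      have hEm : kEm k n = 2 * u + 2 := by rw [kEm, if_neg hmodne, ← hu]
      have h2 : 2 ≤ r + 1 := by omega
      have hle : r + 1 ≤ k := by omega
      rw [hEps, hEm, pow_zero, one_mul, hn', hκB p hp u (r+1) h2 hle]
      congr 1
      push_cast
      ring
  have hppos : ∀ p : ℕ, p.Prime → (1:ℝ) ≤ (p:ℝ) := by
    intro p hp; exact_mod_cast hp.one_lt.le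
  -- positivity on prime powers
  have hpos : ∀ p : ℕ, p.Prime → ∀ n : ℕ, 0 < κ (p ^ n) := by
    intro p hp n
    rcases Nat.eq_zero_or_pos n with h | h
    · simp [h, hκ1]
    · rw [hform p hp n h]
      have hp0 : (0:ℝ) < (p:ℝ) := by exact_mod_cast hp.pos
      positivity
  -- per-prime inequality
  have hkey : ∀ p : ℕ, p.Prime → ∀ a e : ℕ, a ≤ e →
      κ (p ^ a) * κ (p ^ (e - a)) ≤ (k:ℝ)^2 * κ (p ^ e) := by
    intro p hp a e hae
    have hk2 : (1:ℝ) ≤ (k:ℝ)^2 := one_le_pow₀ hk1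
    rcases Nat.eq_zero_or_pos a with h0 | h1
    · subst h0
      simp only [Nat.sub_zero, pow_zero, hκ1, one_mul]
      nlinarith [hpos p hp e]
    rcases Nat.eq_or_lt_of_le hae with he | hlt
    · subst he
      simp only [Nat.sub_self, pow_zero, hκ1, mul_one]
      nlinarith [hpos p hp a]
    · have hb1 : 1 ≤ e - a := by omega
      have hab : a + (e - a) = e := by omega
      have he1 : 1 ≤ e := by omega
      rw [hform p hp a h1, hform p hp (e-a) hb1, hform p hp e he1]
      have hp1 : (1:ℝ) ≤ (p:ℝ) := hppos p hp
      have hp0 : (0:ℝ) < (p:ℝ) := lt_of_lt_of_le one_pos hp1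
      have hmle : kEm k e ≤ kEm k a + kEm k (e - a) := by
        have := kEm_superadd k hk a (e-a) h1 hb1
        rwa [hab] at this
      have heps : kEps k a + kEps k (e-a) ≤ 2 + kEps k e := by
        simp only [kEps]; split_ifs <;> omega
      calc (k:ℝ) ^ kEps k a * (p:ℝ) ^ (-(kEm k a : ℝ)/2) *
            ((k:ℝ) ^ kEps k (e-a) * (p:ℝ) ^ (-(kEm k (e-a) : ℝ)/2))
          = (k:ℝ) ^ (kEps k a + kEps k (e-a)) *
            (p:ℝ) ^ (-(kEm k a : ℝ)/2 + -(kEm k (e-a) : ℝ)/2) := by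
            rw [pow_add, Real.rpow_add hp0]; ring
        _ ≤ (k:ℝ) ^ (2 + kEps k e) * (p:ℝ) ^ (-(kEm k e : ℝ)/2) := by
            apply mul_le_mul
            · exact pow_le_pow_right₀ hk1 heps
            · apply Real.rpow_le_rpow_of_exponent_le hp1
              have : (kEm k e : ℝ) ≤ (kEm k a : ℝ) + (kEm k (e-a) : ℝ) := by
                exact_mod_cast hmle
              linarith
            · positivity
            · positivity
        _ = (k:ℝ)^2 * ((k:ℝ) ^ kEps k e * (p:ℝ) ^ (-(kEm k e : ℝ)/2)) := by
            rw [pow_add]; ring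
  -- multiplicativity over a set of primes
  have hprodmul : ∀ s : Finset ℕ, (∀ p ∈ s, p.Prime) → ∀ f : ℕ → ℕ,
      κ (∏ p ∈ s, p ^ f p) = ∏ p ∈ s, κ (p ^ f p) := by
    intro s
    induction s using Finset.induction_on with
    | empty => intro _ f; simpa using hκ1
    | insert x s' hx ih =>
      intro hs f
      have hxp : x.Prime := hs x (Finset.mem_insert_self x s')
      have hcop : Nat.Coprime (x ^ f x) (∏ p ∈ s', p ^ f p) := by
        apply Nat.Coprime.pow_left
        apply Nat.Coprime.prod_right
        intro p hp
        apply Nat.Coprime.pow_right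
        have hpp : p.Prime := hs p (Finset.mem_insert_of_mem hp)
        exact (Nat.coprime_primes hxp hpp).mpr (fun h => hx (h ▸ hp))
      rw [Finset.prod_insert hx, Finset.prod_insert hx, hκmul _ _ hcop,
        ih (fun p hp => hs p (Finset.mem_insert_of_mem hp)) f]
  have hq0 : q ≠ 0 := hq.ne'
  have hd0 : d ≠ 0 := by
    rintro rfl
    exact hq0 (Nat.eq_zero_of_zero_dvd hd)
  -- factorization product formula over q.primeFactors
  have hκprod : ∀ n : ℕ, n ∣ q → κ n = ∏ p ∈ q.primeFactors, κ (p ^ n.factorization p) := by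
    intro n hn
    have hn0 : n ≠ 0 := by
      rintro rfl; exact hq0 (Nat.eq_zero_of_zero_dvd hn)
    have hsub : n.primeFactors ⊆ q.primeFactors := Nat.primeFactors_mono hn hq0
    have h1 : ∏ p ∈ n.primeFactors, p ^ n.factorization p = n := by
      rw [← Nat.support_factorization]
      exact Nat.factorization_prod_pow_eq_self hn0
    have h2 : ∏ p ∈ q.primeFactors, p ^ n.factorization p
        = ∏ p ∈ n.primeFactors, p ^ n.factorization p := by
      refine (Finset.prod_subset hsub ?_).symm
      intro p _ hp
      have hz : n.factorization p = 0 := by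
        rw [← Nat.support_factorization] at hp
        exact Finsupp.notMem_support_iff.mp hp
      rw [hz, pow_zero]
    conv_lhs => rw [← h1, ← h2]
    exact hprodmul q.primeFactors (fun p hp => Nat.prime_of_mem_primeFactors hp) _
  -- assemble
  have hdvd' : q / d ∣ q := Nat.div_dvd_of_dvd hd
  rw [hκprod d hd, hκprod (q/d) hdvd', hκprod q dvd_rfl]
  have hfdiv : ∀ p : ℕ, (q/d).factorization p = q.factorization p - d.factorization p := by
    intro p
    rw [Nat.factorization_div hd, Finsupp.tsub_apply]
  have hfle : ∀ p : ℕ, d.factorization p ≤ q.factorization p := by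
    intro p
    exact (Nat.factorization_le_iff_dvd hd0 hq0).mpr hd p
  calc (∏ p ∈ q.primeFactors, κ (p ^ d.factorization p)) *
        ∏ p ∈ q.primeFactors, κ (p ^ (q/d).factorization p)
      = ∏ p ∈ q.primeFactors,
          (κ (p ^ d.factorization p) * κ (p ^ (q.factorization p - d.factorization p))) := by
        rw [← Finset.prod_mul_distrib]
        exact Finset.prod_congr rfl (fun p _ => by rw [hfdiv p])
    _ ≤ ∏ p ∈ q.primeFactors, ((k:ℝ)^2 * κ (p ^ q.factorization p)) := by
        apply Finset.prod_le_prod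
        · intro p hp
          have hpp := Nat.prime_of_mem_primeFactors hp
          exact mul_nonneg (hpos p hpp _).le (hpos p hpp _).le
        · intro p hp
          have hpp := Nat.prime_of_mem_primeFactors hp
          exact hkey p hpp _ _ (hfle p)
    _ = (k:ℝ) ^ (2 * q.primeFactors.card) * ∏ p ∈ q.primeFactors, κ (p ^ q.factorization p) := by
        rw [Finset.prod_mul_distrib, Finset.prod_const, ← pow_mul]
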